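/- Let F(X) = (f₁(X),…,f_m(X)) with each f_i convex, and suppose F is Lipschitz: ‖F(X) − F(Y)‖ ≤ L(F)‖X − Y‖_F for all X, Y. Suppose strong duality holds for the problem: minimize f_τ(X) subject to f_i(X) ≤ 0 for i = 1,…,m, and that the step sizes satisfy 0 < inf_k δ_k ≤ sup_k δ_k < 2/L(F)². Then the sequence {X^k} defined by X^k = argmin_X { f_τ(X) + ⟨y^{k−1}, F(X)⟩ }, y^k = [y^{k−1} + δ_k F(X^k)]₊, started from y⁰ = 0, converges to the unique solution of the constrained problem. -/

import Mathlib

open Matrix Filter Topology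

noncomputable def frob {n₁ n₂ : ℕ} (X : Matrix (Fin n₁) (Fin n₂) ℝ) : ℝ :=
  Real.sqrt (∑ i, ∑ j, (X i j) ^ 2)

noncomputable def mInner {n₁ n₂ : ℕ} (X Y : Matrix (Fin n₁) (Fin n₂) ℝ) : ℝ :=
  ∑ i, ∑ j, X i j * Y i j

noncomputable def singVal {n₁ n₂ : ℕ} (X : Matrix (Fin n₁) (Fin n₂) ℝ) (j : Fin n₂) : ℝ :=
  Real.sqrt ((show (Xᵀ * X).IsHermitian by
    simpa [Matrix.conjTranspose_eq_transpose_of_trivial] using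
      Matrix.isHermitian_conjTranspose_mul_self X).eigenvalues j)

noncomputable def nuclearNorm {n₁ n₂ : ℕ} (X : Matrix (Fin n₁) (Fin n₂) ℝ) : ℝ :=
  ∑ j, singVal X j

noncomputable def specNorm {n₁ n₂ : ℕ} (X : Matrix (Fin n₁) (Fin n₂) ℝ) : ℝ :=
  ⨆ j, singVal X j

noncomputable def ftau {n₁ n₂ : ℕ} (τ : ℝ) (X : Matrix (Fin n₁) (Fin n₂) ℝ) : ℝ :=
  τ * nuclearNorm X + (1 / 2) * frob X ^ 2

def projSet {n₁ n₂ : ℕ} (Ω : Finset (Fin n₁ × Fin n₂)) (X : Matrix (Fin n₁) (Fin n₂) ℝ) :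
    Matrix (Fin n₁) (Fin n₂) ℝ :=
  Matrix.of fun i j => if (i, j) ∈ Ω then X i j else 0

def IsSubgradAt {n₁ n₂ : ℕ} (f : Matrix (Fin n₁) (Fin n₂) ℝ → ℝ)
    (Z X₀ : Matrix (Fin n₁) (Fin n₂) ℝ) : Prop :=
  ∀ X, f X₀ + mInner Z (X - X₀) ≤ f X

noncomputable def eNorm {m : ℕ} (v : Fin m → ℝ) : ℝ := Real.sqrt (∑ i, v i ^ 2)

noncomputable def eInner {m : ℕ} (v w : Fin m → ℝ) : ℝ := ∑ i, v i * w i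

section AuxNuclear
variable {n₁ n₂ : ℕ}

lemma mInner_eq_trace (X Y : Matrix (Fin n₁) (Fin n₂) ℝ) :
    mInner X Y = Matrix.trace (Xᴴ * Y) := by
  unfold mInner Matrix.trace
  rw [Finset.sum_comm]
  simp [Matrix.mul_apply, Matrix.diag, Matrix.conjTranspose_apply]

lemma psd_diag_nonneg {n : ℕ} {M : Matrix (Fin n) (Fin n) ℝ} (hM : M.PosSemidef) (j : Fin n) :
    0 ≤ M j j := by
  exact hM.diag_nonneg

lemma exists_dual_matrix (X : Matrix (Fin n₁) (Fin n₂) ℝ) :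
    ∃ Y : Matrix (Fin n₁) (Fin n₂) ℝ, Matrix.PosSemidef (1 - Yᴴ * Y) ∧
      mInner X Y = nuclearNorm X := by
  set hA : (Xᵀ * X).IsHermitian := (by simpa [Matrix.conjTranspose_eq_transpose_of_trivial] using Matrix.isHermitian_conjTranspose_mul_self X) with hAdef
  set V : Matrix (Fin n₂) (Fin n₂) ℝ := (hA.eigenvectorUnitary : Matrix (Fin n₂) (Fin n₂) ℝ) with hV
  have hV1 : Vᴴ * V = 1 := by
    simpa [Matrix.star_eq_conjTranspose] using Unitary.coe_star_mul_self hA.eigenvectorUnitary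
  have hV2 : V * Vᴴ = 1 := by
    simpa [Matrix.star_eq_conjTranspose] using Unitary.coe_mul_star_self hA.eigenvectorUnitary
  have spec : Xᴴ * X = V * diagonal hA.eigenvalues * Vᴴ := by
    simpa [Matrix.star_eq_conjTranspose] using hA.spectral_theorem
  set lam := hA.eigenvalues with hlam
  have hlam0 : ∀ j, 0 ≤ lam j := fun j =>
    (Matrix.posSemidef_conjTranspose_mul_self X).eigenvalues_nonneg j
  set g : Fin n₂ → ℝ := fun j => if lam j = 0 then 0 else Real.sqrt (lam j) / lam j with hg
  refine ⟨X * (V * diagonal g * Vᴴ), ?_, ?_⟩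
  · have hYtY : (X * (V * diagonal g * Vᴴ))ᴴ * (X * (V * diagonal g * Vᴴ))
        = V * diagonal (fun j => g j ^ 2 * lam j) * Vᴴ := by
      have hMt : (V * diagonal g * Vᴴ)ᴴ = V * diagonal g * Vᴴ := by
        simp [Matrix.conjTranspose_mul, Matrix.diagonal_conjTranspose, Matrix.mul_assoc]
      calc (X * (V * diagonal g * Vᴴ))ᴴ * (X * (V * diagonal g * Vᴴ))
          = (V * diagonal g * Vᴴ) * (Xᴴ * X) * (V * diagonal g * Vᴴ) := by
            rw [Matrix.conjTranspose_mul, hMt]; simp only [Matrix.mul_assoc]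
        _ = V * diagonal (fun j => g j ^ 2 * lam j) * Vᴴ := by
            rw [spec]
            calc V * diagonal g * Vᴴ * (V * diagonal lam * Vᴴ) * (V * diagonal g * Vᴴ)
                = V * (diagonal g * (Vᴴ * V) * diagonal lam * (Vᴴ * V) * diagonal g) * Vᴴ := by
                  simp only [Matrix.mul_assoc]
              _ = V * diagonal (fun j => g j ^ 2 * lam j) * Vᴴ := by
                  rw [hV1]
                  simp only [Matrix.mul_one, Matrix.diagonal_mul_diagonal]
                  have hfun : (fun i => g i * lam i * g i) = fun j => g j ^ 2 * lam j := by
                    funext j; ring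
                  rw [hfun]
    rw [hYtY]
    have h1 : (1 : Matrix (Fin n₂) (Fin n₂) ℝ) - V * diagonal (fun j => g j ^ 2 * lam j) * Vᴴ
        = V * diagonal (fun j => 1 - g j ^ 2 * lam j) * Vᴴ := by
      have : (diagonal (fun j => 1 - g j ^ 2 * lam j) : Matrix (Fin n₂) (Fin n₂) ℝ)
          = 1 - diagonal (fun j => g j ^ 2 * lam j) := by
        rw [← Matrix.diagonal_one, ← Matrix.diagonal_sub]
      rw [this, Matrix.mul_sub, Matrix.sub_mul, Matrix.mul_one, hV2]
    rw [h1]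
    refine Matrix.PosSemidef.mul_mul_conjTranspose_same ?_ V
    refine Matrix.posSemidef_diagonal_iff.mpr fun j => ?_
    by_cases h : lam j = 0
    · simp [hg, h]
    · have : g j ^ 2 * lam j = 1 := by
        have hl : 0 < lam j := lt_of_le_of_ne (hlam0 j) (Ne.symm h)
        simp only [hg, if_neg h]
        rw [div_pow, Real.sq_sqrt (hlam0 j)]
        field_simp
      rw [this]; norm_num
  · rw [mInner_eq_trace]
    have : Xᴴ * (X * (V * diagonal g * Vᴴ)) = V * (diagonal lam * diagonal g) * Vᴴ := by
      calc Xᴴ * (X * (V * diagonal g * Vᴴ)) = (Xᴴ * X) * V * diagonal g * Vᴴ := by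
            simp only [Matrix.mul_assoc]
        _ = V * diagonal lam * (Vᴴ * V) * diagonal g * Vᴴ := by
            rw [spec]; simp only [Matrix.mul_assoc]
        _ = V * (diagonal lam * diagonal g) * Vᴴ := by
            rw [hV1]; simp only [Matrix.mul_one, Matrix.mul_assoc]
    rw [this, Matrix.trace_mul_cycle, ← Matrix.mul_assoc, hV1, Matrix.one_mul]
    rw [Matrix.diagonal_mul_diagonal, Matrix.trace_diagonal]
    unfold nuclearNorm singVal
    refine Finset.sum_congr rfl fun j _ => ?_
    by_cases h : lam j = 0
    · simp [hg, h, ← hAdef, ← hlam, Real.sqrt_eq_zero', h.le]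
    · simp only [hg, if_neg h, ← hAdef, ← hlam]
      field_simp

lemma mInner_le_nuclearNorm (W Y : Matrix (Fin n₁) (Fin n₂) ℝ)
    (hY : Matrix.PosSemidef (1 - Yᴴ * Y)) : mInner W Y ≤ nuclearNorm W := by
  set hA : (Wᵀ * W).IsHermitian := (by simpa [Matrix.conjTranspose_eq_transpose_of_trivial] using Matrix.isHermitian_conjTranspose_mul_self W) with hAdef
  set V : Matrix (Fin n₂) (Fin n₂) ℝ := (hA.eigenvectorUnitary : Matrix (Fin n₂) (Fin n₂) ℝ) with hV
  have hV1 : Vᴴ * V = 1 := by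
    simpa [Matrix.star_eq_conjTranspose] using Unitary.coe_star_mul_self hA.eigenvectorUnitary
  have hV2 : V * Vᴴ = 1 := by
    simpa [Matrix.star_eq_conjTranspose] using Unitary.coe_mul_star_self hA.eigenvectorUnitary
  have spec : Wᴴ * W = V * diagonal hA.eigenvalues * Vᴴ := by
    simpa [Matrix.star_eq_conjTranspose] using hA.spectral_theorem
  set lam := hA.eigenvalues with hlam
  have hlam0 : ∀ j, 0 ≤ lam j := fun j =>
    (Matrix.posSemidef_conjTranspose_mul_self W).eigenvalues_nonneg j
  have key : mInner W Y = ∑ j, ∑ i, (W * V) i j * (Y * V) i j := by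
    rw [mInner_eq_trace]
    have h1 : Matrix.trace (Wᴴ * Y) = Matrix.trace ((W * V)ᴴ * (Y * V)) := by
      rw [Matrix.conjTranspose_mul]
      calc Matrix.trace (Wᴴ * Y) = Matrix.trace (Y * Wᴴ) := Matrix.trace_mul_comm _ _
        _ = Matrix.trace (Y * (V * Vᴴ) * Wᴴ) := by rw [hV2, Matrix.mul_one]
        _ = Matrix.trace ((Y * V) * (Vᴴ * Wᴴ)) := by simp only [Matrix.mul_assoc]
        _ = Matrix.trace ((Vᴴ * Wᴴ) * (Y * V)) := Matrix.trace_mul_comm _ _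
    rw [h1]
    simp only [Matrix.trace, Matrix.diag, Matrix.mul_apply, Matrix.conjTranspose_apply,
      star_trivial]
  have hP : ∀ j, ∑ i, (W * V) i j ^ 2 = lam j := by
    intro j
    have h2 : ((W * V)ᴴ * (W * V)) = diagonal lam := by
      rw [Matrix.conjTranspose_mul]
      calc Vᴴ * Wᴴ * (W * V) = Vᴴ * (Wᴴ * W) * V := by simp only [Matrix.mul_assoc]
        _ = Vᴴ * V * diagonal lam * (Vᴴ * V) := by rw [spec]; simp only [Matrix.mul_assoc]
        _ = diagonal lam := by rw [hV1]; simp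
    have h3 : ((W * V)ᴴ * (W * V)) j j = ∑ i, (W * V) i j ^ 2 := by
      simp only [Matrix.mul_apply, Matrix.conjTranspose_apply, pow_two, star_trivial]
    rw [← h3, h2, Matrix.diagonal_apply_eq]
  have hQ : ∀ j, ∑ i, (Y * V) i j ^ 2 ≤ 1 := by
    intro j
    have hpsd := hY.conjTranspose_mul_mul_same V
    have h2 : Vᴴ * (1 - Yᴴ * Y) * V = 1 - (Y * V)ᴴ * (Y * V) := by
      rw [Matrix.mul_sub, Matrix.sub_mul, Matrix.mul_one, hV1, Matrix.conjTranspose_mul]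
      simp only [Matrix.mul_assoc]
    rw [h2] at hpsd
    have h3 := psd_diag_nonneg hpsd j
    have h4 : ((Y * V)ᴴ * (Y * V)) j j = ∑ i, (Y * V) i j ^ 2 := by
      simp only [Matrix.mul_apply, Matrix.conjTranspose_apply, pow_two, star_trivial]
    simp only [Matrix.sub_apply, Matrix.one_apply_eq, h4] at h3
    linarith
  rw [key]
  unfold nuclearNorm
  refine Finset.sum_le_sum fun j _ => ?_
  have hcs := Finset.sum_mul_sq_le_sq_mul_sq Finset.univ
    (fun i => (W * V) i j) (fun i => (Y * V) i j)
  rw [hP j] at hcs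
  have hb : (∑ i, (W * V) i j * (Y * V) i j) ^ 2 ≤ lam j := by
    calc (∑ i, (W * V) i j * (Y * V) i j) ^ 2 ≤ lam j * ∑ i, (Y * V) i j ^ 2 := hcs
      _ ≤ lam j * 1 := mul_le_mul_of_nonneg_left (hQ j) (hlam0 j)
      _ = lam j := mul_one _
  calc ∑ i, (W * V) i j * (Y * V) i j ≤ |∑ i, (W * V) i j * (Y * V) i j| := le_abs_self _
    _ = Real.sqrt ((∑ i, (W * V) i j * (Y * V) i j) ^ 2) := (Real.sqrt_sq_eq_abs _).symm
    _ ≤ Real.sqrt (lam j) := Real.sqrt_le_sqrt hb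
    _ = singVal W j := rfl

lemma nuclearNorm_convexOn :
    ConvexOn ℝ Set.univ (nuclearNorm (n₁ := n₁) (n₂ := n₂)) := by
  refine ⟨convex_univ, fun P _ Q _ a b ha hb hab => ?_⟩
  obtain ⟨Y, hY, hXY⟩ := exists_dual_matrix (a • P + b • Q)
  have hlin : mInner (a • P + b • Q) Y = a * mInner P Y + b * mInner Q Y := by
    simp only [mInner, Matrix.add_apply, Matrix.smul_apply, smul_eq_mul, add_mul,
      Finset.sum_add_distrib, Finset.mul_sum, mul_assoc]
  have h1 := mInner_le_nuclearNorm P Y hY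
  have h2 := mInner_le_nuclearNorm Q Y hY
  calc nuclearNorm (a • P + b • Q) = a * mInner P Y + b * mInner Q Y := by rw [← hXY, hlin]
    _ ≤ a * nuclearNorm P + b * nuclearNorm Q :=
        add_le_add (mul_le_mul_of_nonneg_left h1 ha) (mul_le_mul_of_nonneg_left h2 hb)
    _ = a • nuclearNorm P + b • nuclearNorm Q := rfl

lemma frob_sq (X : Matrix (Fin n₁) (Fin n₂) ℝ) :
    frob X ^ 2 = ∑ i, ∑ j, X i j ^ 2 :=
  Real.sq_sqrt (Finset.sum_nonneg fun i _ => Finset.sum_nonneg fun j _ => sq_nonneg _)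

lemma frob_nonneg (X : Matrix (Fin n₁) (Fin n₂) ℝ) : 0 ≤ frob X := Real.sqrt_nonneg _

lemma frob_sub_comm (A B : Matrix (Fin n₁) (Fin n₂) ℝ) : frob (A - B) = frob (B - A) := by
  unfold frob
  congr 1
  refine Finset.sum_congr rfl fun i _ => Finset.sum_congr rfl fun j _ => ?_
  simp only [Matrix.sub_apply]; ring

lemma eq_of_frob_sub_eq_zero {A B : Matrix (Fin n₁) (Fin n₂) ℝ} (h : frob (A - B) = 0) :
    A = B := by
  have hS : ∑ i, ∑ j, (A - B) i j ^ 2 = 0 := by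
    have h2 := frob_sq (A - B)
    rw [h] at h2
    simpa using h2.symm
  ext i j
  have h1 := (Finset.sum_eq_zero_iff_of_nonneg
    (fun i _ => Finset.sum_nonneg fun j _ => sq_nonneg ((A - B) i j))).mp hS i (Finset.mem_univ i)
  have h2 := (Finset.sum_eq_zero_iff_of_nonneg
    (fun j _ => sq_nonneg ((A - B) i j))).mp h1 j (Finset.mem_univ j)
  have h3 : (A - B) i j = 0 := by
    have := sq_eq_zero_iff.mp h2
    exact this
  have := sub_eq_zero.mp (by simpa [Matrix.sub_apply] using h3)
  exact this

lemma entry_abs_le_frob (X : Matrix (Fin n₁) (Fin n₂) ℝ) (i : Fin n₁) (j : Fin n₂) :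
    |X i j| ≤ frob X := by
  rw [← Real.sqrt_sq_eq_abs]
  apply Real.sqrt_le_sqrt
  calc X i j ^ 2 ≤ ∑ j', X i j' ^ 2 :=
        Finset.single_le_sum (f := fun j' => X i j' ^ 2)
          (fun j' _ => sq_nonneg _) (Finset.mem_univ j)
    _ ≤ ∑ i', ∑ j', X i' j' ^ 2 :=
        Finset.single_le_sum (f := fun i' => ∑ j', X i' j' ^ 2)
          (fun i' _ => Finset.sum_nonneg fun j' _ => sq_nonneg _) (Finset.mem_univ i)

lemma sum_sq_combo (t : ℝ) (P Q : Matrix (Fin n₁) (Fin n₂) ℝ) :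
    frob ((1 - t) • P + t • Q) ^ 2
      = (1 - t) * frob P ^ 2 + t * frob Q ^ 2 - t * (1 - t) * frob (Q - P) ^ 2 := by
  simp only [frob_sq]
  have hpt : ∀ i j, ((1 - t) • P + t • Q) i j ^ 2
      = (1 - t) * P i j ^ 2 + t * Q i j ^ 2 - t * (1 - t) * (Q - P) i j ^ 2 := by
    intro i j
    simp only [Matrix.add_apply, Matrix.smul_apply, Matrix.sub_apply, smul_eq_mul]
    ring
  simp only [hpt, Finset.sum_add_distrib, Finset.sum_sub_distrib, Finset.mul_sum]

lemma strongly_convex_min {h : Matrix (Fin n₁) (Fin n₂) ℝ → ℝ}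
    (hc : ConvexOn ℝ Set.univ h) {W : Matrix (Fin n₁) (Fin n₂) ℝ}
    (hmin : ∀ Z, h W + (1/2) * frob W ^ 2 ≤ h Z + (1/2) * frob Z ^ 2)
    (Z : Matrix (Fin n₁) (Fin n₂) ℝ) :
    h W + (1/2) * frob W ^ 2 + (1/2) * frob (Z - W) ^ 2 ≤ h Z + (1/2) * frob Z ^ 2 := by
  set M := h W + (1/2) * frob W ^ 2 with hM
  set R := h Z + (1/2) * frob Z ^ 2 with hR
  set r := (1/2) * frob (Z - W) ^ 2 with hrdef
  have hr0 : 0 ≤ r := mul_nonneg (by norm_num) (sq_nonneg _)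
  have key : ∀ t : ℝ, 0 < t → t < 1 → M + (1 - t) * r ≤ R := by
    intro t ht0 ht1
    have hcomb := hc.2 (Set.mem_univ W) (Set.mem_univ Z)
      (by linarith : (0:ℝ) ≤ 1 - t) ht0.le (by ring)
    have hq := sum_sq_combo t W Z
    have hm := hmin ((1 - t) • W + t • Z)
    simp only [smul_eq_mul] at hcomb
    have hre : (1 - t) * M + t * R - t * (1 - t) * r
        = (1 - t) * h W + (1 - t) * ((1/2) * frob W ^ 2) + t * h Z
          + t * ((1/2) * frob Z ^ 2) - t * (1 - t) * ((1/2) * frob (Z - W) ^ 2) := by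
      rw [hM, hR, hrdef]; ring
    have hcore : M ≤ (1 - t) * M + t * R - t * (1 - t) * r := by
      rw [hre]
      linarith [hm, hcomb, hq]
    have hstep : t * (M + (1 - t) * r) ≤ t * R := by nlinarith [hcore]
    have := (mul_le_mul_iff_right₀ ht0).mp hstep
    linarith
  by_contra hcon
  push_neg at hcon
  set ε := M + r - R with hε
  have hε0 : 0 < ε := by
    have : R < M + r := by
      simp only [hM, hR, hrdef] at hcon ⊢
      linarith
    linarith
  set t := min (1/2 : ℝ) (ε / (2 * (r + 1))) with htdef
  have ht0 : 0 < t := lt_min (by norm_num) (div_pos hε0 (by linarith))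
  have ht1 : t < 1 := lt_of_le_of_lt (min_le_left _ _) (by norm_num)
  have htr : t * r < ε := by
    have h1 : t ≤ ε / (2 * (r + 1)) := min_le_right _ _
    have h2 : t * r ≤ ε / (2 * (r + 1)) * r := mul_le_mul_of_nonneg_right h1 hr0
    have h3 : ε / (2 * (r + 1)) * r < ε := by
      rw [div_mul_eq_mul_div, div_lt_iff₀ (by linarith : (0:ℝ) < 2 * (r + 1))]
      nlinarith
    linarith
  have hk := key t ht0 ht1
  have : M + r - t * r ≤ R := by linarith [hk]
  linarith

lemma convexOn_weighted_sum {m : ℕ} (y : Fin m → ℝ) (hy : ∀ i, 0 ≤ y i)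
    (f : Fin m → Matrix (Fin n₁) (Fin n₂) ℝ → ℝ) (hf : ∀ i, ConvexOn ℝ Set.univ (f i)) :
    ConvexOn ℝ Set.univ (fun Z => ∑ i, y i * f i Z) := by
  classical
  have hgen : ∀ s : Finset (Fin m), ConvexOn ℝ Set.univ (fun Z => ∑ i ∈ s, y i * f i Z) := by
    intro s
    induction s using Finset.induction with
    | empty => simpa using convexOn_const (0:ℝ) convex_univ
    | @insert a s ha ih =>
      have h1 : ConvexOn ℝ Set.univ (fun Z => y a * f a Z) := by
        simpa [smul_eq_mul] using (hf a).smul (hy a)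
      have := h1.add ih
      refine this.congr ?_
      intro Z _
      simp [Finset.sum_insert ha]
  exact hgen Finset.univ

end AuxNuclear

/-- Uzawa/SVT iteration for general convex constraints. With
`F(X) = (f₁(X),…,f_m(X))` convex and `L`-Lipschitz, strong duality (existence of a saddle
point with `y* ≥ 0`), and step sizes `0 < inf δ_k ≤ sup δ_k < 2/L²`, the iterates
`X^k = argmin_X f_τ(X) + ⟨y^{k-1}, F(X)⟩`, `y^k = [y^{k-1} + δ_k F(X^k)]₊` from `y⁰ = 0`
converge to the unique solution of: minimize `f_τ(X)` s.t. `f_i(X) ≤ 0` for all `i`. -/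
theorem uzawa_convergence (n₁ n₂ m : ℕ) (τ L : ℝ) (hτ : 0 < τ) (hL : 0 ≤ L)
    (f : Fin m → Matrix (Fin n₁) (Fin n₂) ℝ → ℝ)
    (hconv : ∀ i, ConvexOn ℝ Set.univ (f i))
    (hLip : ∀ A B : Matrix (Fin n₁) (Fin n₂) ℝ,
      eNorm (fun i => f i A - f i B) ≤ L * frob (A - B))
    (hsaddle : ∃ (Xs : Matrix (Fin n₁) (Fin n₂) ℝ) (ys : Fin m → ℝ),
      (∀ i, 0 ≤ ys i) ∧
      (∀ y : Fin m → ℝ, (∀ i, 0 ≤ y i) →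
        ftau τ Xs + ∑ i, y i * f i Xs ≤ ftau τ Xs + ∑ i, ys i * f i Xs) ∧
      (∀ X, ftau τ Xs + ∑ i, ys i * f i Xs ≤ ftau τ X + ∑ i, ys i * f i X))
    (δ : ℕ → ℝ)
    (hδ : ∃ a b : ℝ, 0 < a ∧ b < 2 / L ^ 2 ∧ ∀ k, a ≤ δ k ∧ δ k ≤ b)
    (X : ℕ → Matrix (Fin n₁) (Fin n₂) ℝ) (y : ℕ → Fin m → ℝ)
    (hy0 : y 0 = 0)
    (hX : ∀ k, IsMinOn (fun Z => ftau τ Z + ∑ i, y k i * f i Z) Set.univ (X (k + 1)))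
    (hy : ∀ k, y (k + 1) = fun i => max (y k i + δ (k + 1) * f i (X (k + 1))) 0) :
    ∃ Xopt : Matrix (Fin n₁) (Fin n₂) ℝ,
      (∀ i, f i Xopt ≤ 0) ∧
      (∀ Z, (∀ i, f i Z ≤ 0) → ftau τ Xopt ≤ ftau τ Z) ∧
      (∀ Z, (∀ i, f i Z ≤ 0) → ftau τ Z = ftau τ Xopt → Z = Xopt) ∧
      Tendsto (fun k => X k) atTop (nhds Xopt) := by
  obtain ⟨Xs, ys, hys0, hys_max, hys_min⟩ := hsaddle
  obtain ⟨a, b, ha0, hb2, hab⟩ := hδ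
  have hab' : a ≤ b := le_trans (hab 0).1 (hab 0).2
  -- L must be positive
  have hL0 : 0 < L := by
    rcases lt_or_eq_of_le hL with h | h
    · exact h
    · exfalso
      rw [← h] at hb2
      norm_num at hb2
      linarith
  have hbL : b * L ^ 2 < 2 := by
    rw [lt_div_iff₀ (by positivity)] at hb2
    linarith
  -- feasibility of Xs
  have hfeas : ∀ i, f i Xs ≤ 0 := by
    intro i
    have h := hys_max (fun j => ys j + if j = i then 1 else 0)
      (fun j => add_nonneg (hys0 j) (by split_ifs <;> norm_num))
    simp only [add_mul, Finset.sum_add_distrib] at h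
    have hsum : ∑ j, (if j = i then (1:ℝ) else 0) * f j Xs = f i Xs := by
      rw [Finset.sum_congr rfl (fun j _ => by
        rw [ite_mul, one_mul, zero_mul])]
      simp
    rw [hsum] at h
    linarith
  -- complementary slackness
  have hterm_nonpos : ∀ i, ys i * f i Xs ≤ 0 :=
    fun i => mul_nonpos_of_nonneg_of_nonpos (hys0 i) (hfeas i)
  have hsum0 : ∑ i, ys i * f i Xs = 0 := by
    have h0 := hys_max 0 (fun _ => le_refl 0)
    simp only [Pi.zero_apply, zero_mul, Finset.sum_const_zero, add_zero] at h0
    have hle : ∑ i, ys i * f i Xs ≤ 0 :=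
      Finset.sum_nonpos fun i _ => hterm_nonpos i
    linarith
  have hcs : ∀ i, ys i * f i Xs = 0 := by
    intro i
    exact (Finset.sum_eq_zero_iff_of_nonpos (fun j _ => hterm_nonpos j)).mp hsum0 i
      (Finset.mem_univ i)
  -- nonnegativity of iterates y k
  have hyk0 : ∀ k i, 0 ≤ y k i := by
    intro k
    induction k with
    | zero => intro i; simp [hy0]
    | succ k _ => intro i; rw [hy k]; exact le_max_right _ _
  -- fixed point property of ys
  have hysfix : ∀ d : ℝ, 0 < d → ∀ i, ys i = max (ys i + d * f i Xs) 0 := by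
    intro d hd i
    rcases mul_eq_zero.mp (hcs i) with h | h
    · rw [h, zero_add]
      have hnp : d * f i Xs ≤ 0 := mul_nonpos_of_nonneg_of_nonpos hd.le (hfeas i)
      rw [max_eq_right hnp]
    · rw [h, mul_zero, add_zero, max_eq_left (hys0 i)]
  -- strong convexity inequality at the saddle point
  have hstar : ∀ Z, (τ * nuclearNorm Xs + ∑ i, ys i * f i Xs) + (1/2) * frob Xs ^ 2
      + (1/2) * frob (Z - Xs) ^ 2
      ≤ (τ * nuclearNorm Z + ∑ i, ys i * f i Z) + (1/2) * frob Z ^ 2 := by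
    have hc1 : ConvexOn ℝ Set.univ (fun Z : Matrix (Fin n₁) (Fin n₂) ℝ => τ * nuclearNorm Z) := by
      simpa [smul_eq_mul] using nuclearNorm_convexOn.smul hτ.le
    have hc : ConvexOn ℝ Set.univ (fun Z => τ * nuclearNorm Z + ∑ i, ys i * f i Z) :=
      hc1.add (convexOn_weighted_sum ys hys0 f hconv)
    refine strongly_convex_min hc (fun Z => ?_)
    have := hys_min Z
    unfold ftau at this
    linarith
  -- strong convexity inequality at each iterate
  have hiter : ∀ k Z, (τ * nuclearNorm (X (k+1)) + ∑ i, y k i * f i (X (k+1)))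
      + (1/2) * frob (X (k+1)) ^ 2 + (1/2) * frob (Z - X (k+1)) ^ 2
      ≤ (τ * nuclearNorm Z + ∑ i, y k i * f i Z) + (1/2) * frob Z ^ 2 := by
    intro k Z
    have hc1 : ConvexOn ℝ Set.univ (fun Z : Matrix (Fin n₁) (Fin n₂) ℝ => τ * nuclearNorm Z) := by
      simpa [smul_eq_mul] using nuclearNorm_convexOn.smul hτ.le
    have hc : ConvexOn ℝ Set.univ (fun Z => τ * nuclearNorm Z + ∑ i, y k i * f i Z) :=
      hc1.add (convexOn_weighted_sum (y k) (hyk0 k) f hconv)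
    refine strongly_convex_min hc (fun W => ?_) Z
    have := isMinOn_iff.mp (hX k) W (Set.mem_univ W)
    unfold ftau at this
    linarith
  -- key inequality
  have hkey : ∀ k, frob (X (k+1) - Xs) ^ 2
      ≤ ∑ i, (y k i - ys i) * (f i Xs - f i (X (k+1))) := by
    intro k
    have h1 := hiter k Xs
    have h2 := hstar (X (k+1))
    rw [frob_sub_comm Xs (X (k+1))] at h1
    have hexp : ∑ i, (y k i - ys i) * (f i Xs - f i (X (k+1)))
        = ((∑ i, y k i * f i Xs) - (∑ i, y k i * f i (X (k+1))))
          - ((∑ i, ys i * f i Xs) - (∑ i, ys i * f i (X (k+1)))) := by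
      simp only [sub_mul, mul_sub]
      rw [Finset.sum_sub_distrib, Finset.sum_sub_distrib, Finset.sum_sub_distrib]
      ring
    rw [hexp]
    linarith
  -- descent inequality
  set c : ℝ := a * (2 - b * L ^ 2) with hcdef
  have hc0 : 0 < c := mul_pos ha0 (by linarith)
  set s : ℕ → ℝ := fun k => ∑ i, (y k i - ys i) ^ 2 with hs
  have hdesc : ∀ k, s (k+1) + c * frob (X (k+1) - Xs) ^ 2 ≤ s k := by
    intro k
    set d2 := frob (X (k+1) - Xs) ^ 2 with hd2
    have hd20 : 0 ≤ d2 := sq_nonneg _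
    have hδk1 : a ≤ δ (k+1) := (hab (k+1)).1
    have hδk2 : δ (k+1) ≤ b := (hab (k+1)).2
    have hδk0 : 0 < δ (k+1) := lt_of_lt_of_le ha0 hδk1
    have hpt : ∀ i, (y (k+1) i - ys i) ^ 2
        ≤ ((y k i - ys i) + δ (k+1) * (f i (X (k+1)) - f i Xs)) ^ 2 := by
      intro i
      conv_lhs => rw [hy k]
      have hfix := hysfix (δ (k+1)) hδk0 i
      have habs := abs_max_sub_max_le_abs (y k i + δ (k+1) * f i (X (k+1)))
        (ys i + δ (k+1) * f i Xs) 0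
      calc (max (y k i + δ (k+1) * f i (X (k+1))) 0 - ys i) ^ 2
          = (max (y k i + δ (k+1) * f i (X (k+1))) 0 - max (ys i + δ (k+1) * f i Xs) 0) ^ 2 := by
            rw [← hfix]
        _
          = |max (y k i + δ (k+1) * f i (X (k+1))) 0 - max (ys i + δ (k+1) * f i Xs) 0| ^ 2 :=
            (sq_abs _).symm
        _ ≤ |y k i + δ (k+1) * f i (X (k+1)) - (ys i + δ (k+1) * f i Xs)| ^ 2 :=
            pow_le_pow_left₀ (abs_nonneg _) habs 2
        _ = ((y k i - ys i) + δ (k+1) * (f i (X (k+1)) - f i Xs)) ^ 2 := by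
            rw [sq_abs]; ring
    have hsumpt : s (k+1) ≤ ∑ i, ((y k i - ys i) + δ (k+1) * (f i (X (k+1)) - f i Xs)) ^ 2 :=
      Finset.sum_le_sum fun i _ => hpt i
    have hexp2 : ∑ i, ((y k i - ys i) + δ (k+1) * (f i (X (k+1)) - f i Xs)) ^ 2
        = s k + 2 * δ (k+1) * ∑ i, (y k i - ys i) * (f i (X (k+1)) - f i Xs)
          + δ (k+1) ^ 2 * ∑ i, (f i (X (k+1)) - f i Xs) ^ 2 := by
      have hpw : ∀ i, ((y k i - ys i) + δ (k+1) * (f i (X (k+1)) - f i Xs)) ^ 2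
          = (y k i - ys i) ^ 2
            + 2 * δ (k+1) * ((y k i - ys i) * (f i (X (k+1)) - f i Xs))
            + δ (k+1) ^ 2 * (f i (X (k+1)) - f i Xs) ^ 2 := fun i => by ring
      simp only [hpw, Finset.sum_add_distrib, Finset.mul_sum, hs]
    have hLipk : ∑ i, (f i (X (k+1)) - f i Xs) ^ 2 ≤ L ^ 2 * d2 := by
      have h1 := hLip (X (k+1)) Xs
      have h2 : eNorm (fun i => f i (X (k+1)) - f i Xs) ^ 2
          ≤ (L * frob (X (k+1) - Xs)) ^ 2 :=
        pow_le_pow_left₀ (Real.sqrt_nonneg _) h1 2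
      have h3 : eNorm (fun i => f i (X (k+1)) - f i Xs) ^ 2
          = ∑ i, (f i (X (k+1)) - f i Xs) ^ 2 :=
        Real.sq_sqrt (Finset.sum_nonneg fun i _ => sq_nonneg _)
      rw [h3] at h2
      calc ∑ i, (f i (X (k+1)) - f i Xs) ^ 2 ≤ (L * frob (X (k+1) - Xs)) ^ 2 := h2
        _ = L ^ 2 * d2 := by rw [hd2]; ring
    have hip : ∑ i, (y k i - ys i) * (f i (X (k+1)) - f i Xs) ≤ -d2 := by
      have h1 := hkey k
      have h2 : ∑ i, (y k i - ys i) * (f i (X (k+1)) - f i Xs)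
          = -(∑ i, (y k i - ys i) * (f i Xs - f i (X (k+1)))) := by
        rw [← Finset.sum_neg_distrib]
        exact Finset.sum_congr rfl fun i _ => by ring
      rw [h2]
      linarith
    have hfinal : s (k+1) ≤ s k - δ (k+1) * (2 - δ (k+1) * L ^ 2) * d2 := by
      have hm1 : 2 * δ (k+1) * ∑ i, (y k i - ys i) * (f i (X (k+1)) - f i Xs)
          ≤ 2 * δ (k+1) * (-d2) :=
        mul_le_mul_of_nonneg_left hip (by positivity)
      have hm2 : δ (k+1) ^ 2 * ∑ i, (f i (X (k+1)) - f i Xs) ^ 2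
          ≤ δ (k+1) ^ 2 * (L ^ 2 * d2) :=
        mul_le_mul_of_nonneg_left hLipk (sq_nonneg _)
      have := hsumpt
      rw [hexp2] at this
      nlinarith
    have hcd : c * d2 ≤ δ (k+1) * (2 - δ (k+1) * L ^ 2) * d2 := by
      have h1 : δ (k+1) * L ^ 2 ≤ b * L ^ 2 :=
        mul_le_mul_of_nonneg_right hδk2 (sq_nonneg _)
      have h2 : c ≤ δ (k+1) * (2 - δ (k+1) * L ^ 2) := by nlinarith
      exact mul_le_mul_of_nonneg_right h2 hd20
    linarith
  -- convergence of s and of the iterates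
  have hs_anti : Antitone s := antitone_nat_of_succ_le fun k => by
    have h1 := hdesc k
    have h2 : 0 ≤ c * frob (X (k+1) - Xs) ^ 2 := mul_nonneg hc0.le (sq_nonneg _)
    linarith
  have hs_bdd : BddBelow (Set.range s) := by
    refine ⟨0, fun x hx => ?_⟩
    obtain ⟨k, rfl⟩ := hx
    exact Finset.sum_nonneg fun i _ => sq_nonneg _
  have hs_conv : Tendsto s atTop (nhds (⨅ k, s k)) := tendsto_atTop_ciInf hs_anti hs_bdd
  have hdiff : Tendsto (fun k => s k - s (k+1)) atTop (nhds 0) := by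
    have h2 : Tendsto (fun k => s (k+1)) atTop (nhds (⨅ k, s k)) :=
      hs_conv.comp (tendsto_add_atTop_nat 1)
    simpa using hs_conv.sub h2
  have hD : Tendsto (fun k => frob (X (k+1) - Xs) ^ 2) atTop (nhds 0) := by
    have hub : ∀ k, frob (X (k+1) - Xs) ^ 2 ≤ (s k - s (k+1)) / c := by
      intro k
      rw [le_div_iff₀ hc0]
      have := hdesc k
      linarith [mul_comm (frob (X (k+1) - Xs) ^ 2) c]
    have hg : Tendsto (fun k => (s k - s (k+1)) / c) atTop (nhds 0) := by
      simpa using hdiff.div_const c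
    exact squeeze_zero (fun k => sq_nonneg _) hub hg
  have hfr0 : Tendsto (fun k => frob (X (k+1) - Xs)) atTop (nhds 0) := by
    have hcont := (Real.continuous_sqrt.tendsto 0).comp hD
    rw [Real.sqrt_zero] at hcont
    have heq : ∀ k, Real.sqrt (frob (X (k+1) - Xs) ^ 2) = frob (X (k+1) - Xs) :=
      fun k => Real.sqrt_sq (frob_nonneg _)
    exact Tendsto.congr (fun k => heq k) hcont
  have hent : ∀ i j, Tendsto (fun k => X (k+1) i j) atTop (nhds (Xs i j)) := by
    intro i j
    have hbnd : ∀ k, ‖X (k+1) i j - Xs i j‖ ≤ frob (X (k+1) - Xs) := by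
      intro k
      rw [Real.norm_eq_abs]
      have := entry_abs_le_frob (X (k+1) - Xs) i j
      simpa [Matrix.sub_apply] using this
    have h0 : Tendsto (fun k => X (k+1) i j - Xs i j) atTop (nhds 0) :=
      squeeze_zero_norm hbnd hfr0
    have := h0.add_const (Xs i j)
    simpa using this
  refine ⟨Xs, hfeas, ?_, ?_, ?_⟩
  · intro Z hZ
    have h1 := hys_min Z
    have h2 : ∑ i, ys i * f i Z ≤ 0 :=
      Finset.sum_nonpos fun i _ => mul_nonpos_of_nonneg_of_nonpos (hys0 i) (hZ i)
    rw [hsum0] at h1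
    linarith
  · intro Z hZ hftau
    have h1 := hstar Z
    have h2 : ∑ i, ys i * f i Z ≤ 0 :=
      Finset.sum_nonpos fun i _ => mul_nonpos_of_nonneg_of_nonpos (hys0 i) (hZ i)
    unfold ftau at hftau
    have h3 : (1/2) * frob (Z - Xs) ^ 2 ≤ 0 := by linarith [hsum0, h1]
    have h4 : frob (Z - Xs) ^ 2 = 0 := le_antisymm (by linarith) (sq_nonneg _)
    have h5 : frob (Z - Xs) = 0 := by
      have := sq_eq_zero_iff.mp h4
      exact this
    exact eq_of_frob_sub_eq_zero h5
  · have hshift : Tendsto (fun k => X (k+1)) atTop (nhds Xs) := by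
      apply tendsto_pi_nhds.mpr
      intro i
      apply tendsto_pi_nhds.mpr
      intro j
      exact hent i j
    exact (tendsto_add_atTop_iff_nat 1).mp hshift
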